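/- Let F be a field containing 𝔽q, equipped with a discrete non-archimedean additive valuation ν : F → ℤ ∪ {∞} with ν(F^*) = ℤ. Let φ, ψ ∈ F[X] be q-linearized polynomials of degree > 1 whose coefficients φ₀, ψ₀ of X satisfy ν(φ₀) = ν(ψ₀) = 0, and let f ∈ F[X] be a nonzero q-linearized polynomial with f ∘ φ = ψ ∘ f. Set λ_ν(h) = −min{(ν(h_i) − ν(h₀))/(q^i − 1) : i ≥ 1, h_i ≠ 0} for q-linearized h = Σ h_i X^{q^i} of degree > 1. If λ_ν(φ) ∈ ℤ, then λ_ν(ψ) ∈ ℤ. (This expresses that isogenies of Drinfeld modules preserve stable reduction at a place.) -/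

import Mathlib

open Polynomial

/-- A polynomial is `q`-linearized if it is of the form `Σ fᵢ X^(qⁱ)`. -/
def IsqLin {F : Type*} [Field F] (q : ℕ) (f : Polynomial F) : Prop :=
  ∀ n, f.coeff n ≠ 0 → ∃ i : ℕ, n = q ^ i

/-- `λ_ν(h) = − min { (ν(hᵢ) − ν(h₀))/(qⁱ − 1) : i ≥ 1, hᵢ ≠ 0 }`. -/
noncomputable def lamNu {F : Type*} [Field F] (q : ℕ) (ν : F → ℤ) (h : Polynomial F) : ℝ :=
  - sInf {y : ℝ | ∃ i : ℕ, 1 ≤ i ∧ h.coeff (q ^ i) ≠ 0 ∧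
      y = ((ν (h.coeff (q ^ i)) : ℝ) - (ν (h.coeff 1) : ℝ)) / ((q : ℝ) ^ i - 1)}

open Finset
section Val
variable {F : Type*} [Field F] (ν : F → ℤ)
  (hmul : ∀ x y : F, x ≠ 0 → y ≠ 0 → ν (x * y) = ν x + ν y)
  (hadd : ∀ x y : F, x ≠ 0 → y ≠ 0 → x + y ≠ 0 → min (ν x) (ν y) ≤ ν (x + y))

include hmul

lemma nu_one : ν 1 = 0 := by
  have := hmul 1 1 one_ne_zero one_ne_zero
  simp at this; omega

lemma nu_neg (x : F) (hx : x ≠ 0) : ν (-x) = ν x := by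
  have h1 : ν ((-1 : F) * (-1)) = ν (-1) + ν (-1) := hmul _ _ (by norm_num) (by norm_num)
  have h2 : ν 1 = 0 := nu_one ν hmul
  simp at h1
  have h3 : ν (-x) = ν (-1) + ν x := by
    rw [← hmul (-1) x (by norm_num) hx]; ring_nf
  omega

lemma nu_pow (x : F) (hx : x ≠ 0) (m : ℕ) : ν (x ^ m) = m * ν x := by
  induction m with
  | zero => simpa using nu_one ν hmul
  | succ k ih =>
      rw [pow_succ, hmul _ _ (pow_ne_zero _ hx) hx, ih]; push_cast; ring

include hadd

lemma nu_add_eq (x y : F) (hx : x ≠ 0) (hxy : y = 0 ∨ (y ≠ 0 ∧ ν x < ν y)) :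
    x + y ≠ 0 ∧ ν (x + y) = ν x := by
  rcases hxy with rfl | ⟨hy, hlt⟩
  · simp [hx]
  have hne : x + y ≠ 0 := by
    intro h
    have : y = -x := by linear_combination h
    rw [this, nu_neg ν hmul x hx] at hlt; omega
  refine ⟨hne, ?_⟩
  have h1 : min (ν x) (ν y) ≤ ν (x + y) := hadd x y hx hy hne
  have h2 : min (ν (x + y)) (ν (-y)) ≤ ν x := by
    have := hadd (x + y) (-y) hne (by simpa using hy) (by ring_nf; simpa using hx)
    have hxx : x + y + -y = x := by ring
    rwa [hxx] at this
  rw [nu_neg ν hmul y hy] at h2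
  omega

lemma nu_sum_ge {ι : Type*} (s : Finset ι) (g : ι → F) (A : ℤ)
    (h : ∀ i ∈ s, g i ≠ 0 → A ≤ ν (g i)) (hne : (∑ i ∈ s, g i) ≠ 0) :
    A ≤ ν (∑ i ∈ s, g i) := by
  classical
  induction s using Finset.cons_induction with
  | empty => simp at hne
  | cons a s ha ih =>
      rw [Finset.sum_cons] at hne ⊢
      by_cases h0 : g a = 0
      · rw [h0, zero_add] at hne ⊢
        exact ih (fun i hi => h i (Finset.mem_cons_of_mem hi)) hne
      by_cases hs : (∑ i ∈ s, g i) = 0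
      · rw [hs, add_zero]
        exact h a (Finset.mem_cons_self a s) h0
      have hA1 : A ≤ ν (g a) := h a (Finset.mem_cons_self a s) h0
      have hA2 : A ≤ ν (∑ i ∈ s, g i) := ih (fun i hi => h i (Finset.mem_cons_of_mem hi)) hs
      have := hadd (g a) _ h0 hs hne
      omega

lemma nu_sum_eq {ι : Type*} [DecidableEq ι] (s : Finset ι) (g : ι → F) (A : ℤ) (i₀ : ι)
    (hi₀ : i₀ ∈ s) (h0 : g i₀ ≠ 0) (hv : ν (g i₀) = A)
    (hrest : ∀ i ∈ s, i ≠ i₀ → g i ≠ 0 → A + 1 ≤ ν (g i)) :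
    (∑ i ∈ s, g i) ≠ 0 ∧ ν (∑ i ∈ s, g i) = A := by
  rw [← Finset.add_sum_erase _ _ hi₀]
  have key := nu_add_eq ν hmul hadd (g i₀) (∑ i ∈ s.erase i₀, g i) h0 ?_
  · rw [hv] at key; exact key
  by_cases hR : (∑ i ∈ s.erase i₀, g i) = 0
  · exact Or.inl hR
  right
  refine ⟨hR, ?_⟩
  have := nu_sum_ge ν hmul hadd (s.erase i₀) g (A + 1)
    (fun i hi hgi => hrest i (Finset.mem_of_mem_erase hi) (Finset.ne_of_mem_erase hi) hgi) hR
  omega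

end Val



section Poly
variable {F : Type*} [Field F] (p q e : ℕ) [CharP F p] [hp : Fact p.Prime]
  (hpe : q = p ^ e) (hq2 : 2 ≤ q)

include hpe hq2

lemma pow_coeff (h : Polynomial F) (hh : ∀ n, h.coeff n ≠ 0 → ∃ i : ℕ, n = q ^ i) (i k : ℕ) :
    (h ^ q ^ i).coeff (q ^ k) =
      if i ≤ k then (h.coeff (q ^ (k - i))) ^ q ^ i else 0 := by
  classical
  have hqi : q ^ i = p ^ (e * i) := by rw [hpe, ← pow_mul]
  have hsum : h ^ q ^ i =
      ∑ m ∈ h.support, C ((h.coeff m) ^ q ^ i) * X ^ (m * q ^ i) := by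
    conv_lhs => rw [h.as_sum_support_C_mul_X_pow]
    rw [hqi, sum_pow_char_pow]
    refine Finset.sum_congr rfl fun m hm => ?_
    rw [mul_pow, ← C_pow, ← pow_mul, ← hqi]
  rw [hsum, finset_sum_coeff]
  have hterm : ∀ m, (C ((h.coeff m) ^ q ^ i) * X ^ (m * q ^ i)).coeff (q ^ k)
      = if q ^ k = m * q ^ i then (h.coeff m) ^ q ^ i else 0 := by
    intro m
    rw [coeff_C_mul, coeff_X_pow]
    split <;> simp
  simp only [hterm]
  by_cases hik : i ≤ k
  · rw [if_pos hik]
    by_cases hc : h.coeff (q ^ (k - i)) = 0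
    · rw [hc, zero_pow (pow_ne_zero _ (by omega))]
      refine Finset.sum_eq_zero fun m hm => ?_
      rw [if_neg]
      intro heq
      obtain ⟨j, rfl⟩ := hh m (mem_support_iff.mp hm)
      rw [← pow_add] at heq
      have hj : k = j + i := Nat.pow_right_injective hq2 heq
      have : j = k - i := by omega
      exact (mem_support_iff.mp hm) (this ▸ hc)
    · rw [Finset.sum_eq_single_of_mem (q ^ (k - i)) (mem_support_iff.mpr hc)]
      · rw [if_pos (by rw [← pow_add]; congr 1; omega)]
      · intro m hm hne
        rw [if_neg]
        intro heq
        obtain ⟨j, rfl⟩ := hh m (mem_support_iff.mp hm)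
        rw [← pow_add] at heq
        have hj : k = j + i := Nat.pow_right_injective hq2 heq
        exact hne (by congr 1; omega)
  · rw [if_neg hik]
    refine Finset.sum_eq_zero fun m hm => ?_
    rw [if_neg]
    intro heq
    obtain ⟨j, rfl⟩ := hh m (mem_support_iff.mp hm)
    rw [← pow_add] at heq
    have hj : k = j + i := Nat.pow_right_injective hq2 heq
    omega

lemma comp_coeff (g h : Polynomial F) (hg : ∀ n, g.coeff n ≠ 0 → ∃ i : ℕ, n = q ^ i) (hh : ∀ n, h.coeff n ≠ 0 → ∃ i : ℕ, n = q ^ i) (k : ℕ) :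
    (g.comp h).coeff (q ^ k) =
      ∑ i ∈ Finset.range (k + 1), g.coeff (q ^ i) * (h.coeff (q ^ (k - i))) ^ q ^ i := by
  classical
  rw [comp_eq_sum_left, Polynomial.sum_def, finset_sum_coeff]
  simp only [coeff_C_mul]
  set T : ℕ → F := fun m => g.coeff m * (h ^ m).coeff (q ^ k) with hT
  have hTzero : ∀ m, m ∉ g.support → T m = 0 := by
    intro m hm; simp [hT, notMem_support_iff.mp hm]
  have hTbig : ∀ m ∈ g.support, m ∉ (Finset.range (k + 1)).image (q ^ ·) → T m = 0 := by
    intro m hm hnot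
    obtain ⟨j, rfl⟩ := hg m (mem_support_iff.mp hm)
    have hjk : ¬ j ≤ k := by
      intro hjk
      exact hnot (Finset.mem_image.mpr ⟨j, Finset.mem_range.mpr (by omega), rfl⟩)
    simp only [hT]
    rw [pow_coeff p q e hpe hq2 h hh j k, if_neg hjk, mul_zero]
  have h1 : ∑ m ∈ g.support, T m
      = ∑ m ∈ g.support ∪ (Finset.range (k + 1)).image (q ^ ·), T m :=
    Finset.sum_subset Finset.subset_union_left
      (fun m hm hns => hTzero m hns)
  have h2 : ∑ m ∈ (Finset.range (k + 1)).image (q ^ ·), T m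
      = ∑ m ∈ g.support ∪ (Finset.range (k + 1)).image (q ^ ·), T m :=
    Finset.sum_subset Finset.subset_union_right
      (fun m hm hns => hTbig m (by
        rcases Finset.mem_union.mp hm with h | h
        · exact h
        · exact absurd h hns) hns)
  have h3 : ∑ m ∈ g.support, T m = ∑ m ∈ (Finset.range (k + 1)).image (q ^ ·), T m := by
    rw [h1, h2]
  rw [h3, Finset.sum_image (fun a _ b _ hab => Nat.pow_right_injective hq2 hab)]
  refine Finset.sum_congr rfl fun i hi => ?_
  simp only [hT]
  have hik := Finset.mem_range.mp hi
  rw [pow_coeff p q e hpe hq2 h hh i k, if_pos (by omega)]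

end Poly

lemma qpow_pos_aux (q i : ℕ) (hq2 : 2 ≤ q) (hi : 1 ≤ i) : (0:ℝ) < (q:ℝ)^i - 1 := by
  have h1 : (2:ℝ) ≤ (q:ℝ) := by exact_mod_cast hq2
  have h2 : (2:ℝ) ≤ (q:ℝ) ^ i :=
    le_trans h1 (le_self_pow₀ (by linarith) (by omega))
  linarith

lemma div_ge_iff_aux (q i : ℕ) (hq2 : 2 ≤ q) (hi : 1 ≤ i) (v m : ℤ) :
    (-(m:ℝ) ≤ (v:ℝ) / ((q:ℝ)^i - 1)) ↔ 0 ≤ v + m * ((q:ℤ)^i - 1) := by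
  have hpos := qpow_pos_aux q i hq2 hi
  rw [le_div_iff₀ hpos]
  have hcast : ((v + m * ((q:ℤ)^i - 1) : ℤ) : ℝ) = v + m * ((q:ℝ)^i - 1) := by
    push_cast; ring
  constructor <;> intro h
  · have h2 : (0:ℝ) ≤ ((v + m * ((q:ℤ)^i - 1) : ℤ) : ℝ) := by rw [hcast]; linarith
    exact_mod_cast h2
  · have h2 : (0:ℝ) ≤ ((v + m * ((q:ℤ)^i - 1) : ℤ) : ℝ) := by exact_mod_cast h
    rw [hcast] at h2; linarith

lemma div_eq_iff_aux (q i : ℕ) (hq2 : 2 ≤ q) (hi : 1 ≤ i) (v m : ℤ) :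
    ((v:ℝ) / ((q:ℝ)^i - 1) = -(m:ℝ)) ↔ v + m * ((q:ℤ)^i - 1) = 0 := by
  have hpos := qpow_pos_aux q i hq2 hi
  rw [div_eq_iff (ne_of_gt hpos)]
  have hcast : ((v + m * ((q:ℤ)^i - 1) : ℤ) : ℝ) = v + m * ((q:ℝ)^i - 1) := by
    push_cast; ring
  constructor <;> intro h
  · have h2 : ((v + m * ((q:ℤ)^i - 1) : ℤ) : ℝ) = 0 := by rw [hcast]; linarith
    exact_mod_cast h2
  · have h2 : ((v + m * ((q:ℤ)^i - 1) : ℤ) : ℝ) = 0 := by exact_mod_cast h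
    rw [hcast] at h2; linarith



theorem stmt19 {Fq F : Type*} [Field Fq] [Fintype Fq] [Field F] [Algebra Fq F]
    (q : ℕ) (hq : q = Fintype.card Fq)
    (ν : F → ℤ)
    (hmul : ∀ x y : F, x ≠ 0 → y ≠ 0 → ν (x * y) = ν x + ν y)
    (hadd : ∀ x y : F, x ≠ 0 → y ≠ 0 → x + y ≠ 0 → min (ν x) (ν y) ≤ ν (x + y))
    (hsurj : ∀ n : ℤ, ∃ x : F, x ≠ 0 ∧ ν x = n)
    (φ ψ : Polynomial F) (hφ : IsqLin q φ) (hψ : IsqLin q ψ)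
    (hdφ : 1 < φ.natDegree) (hdψ : 1 < ψ.natDegree)
    (hφ0 : φ.coeff 1 ≠ 0) (hψ0 : ψ.coeff 1 ≠ 0)
    (hνφ : ν (φ.coeff 1) = 0) (hνψ : ν (ψ.coeff 1) = 0)
    (f : Polynomial F) (hf : IsqLin q f) (hf0 : f ≠ 0)
    (hcomm : f.comp φ = ψ.comp f) :
    (∃ n : ℤ, lamNu q ν φ = n) → ∃ n : ℤ, lamNu q ν ψ = n := by
  classical
  rintro ⟨n, hn⟩
  have hq2 : 2 ≤ q := by rw [hq]; exact Fintype.one_lt_card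
  -- characteristic
  haveI : CharP Fq (ringChar Fq) := ringChar.charP Fq
  obtain ⟨e, hp, hcard⟩ := FiniteField.card Fq (ringChar Fq)
  set p := ringChar Fq
  haveI : Fact p.Prime := ⟨hp⟩
  haveI : CharP F p := charP_of_injective_algebraMap (algebraMap Fq F).injective p
  have hpe : q = p ^ (e : ℕ) := by rw [hq, hcard]
  -- the φ-set
  set Sφ : Set ℝ := {y : ℝ | ∃ i : ℕ, 1 ≤ i ∧ φ.coeff (q ^ i) ≠ 0 ∧
      y = ((ν (φ.coeff (q ^ i)) : ℝ) - (ν (φ.coeff 1) : ℝ)) / ((q : ℝ) ^ i - 1)} with hSφ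
  have hφne : φ ≠ 0 := fun h => by simp [h] at hdφ
  obtain ⟨iφ, hiφ⟩ := hφ _ (mt leadingCoeff_eq_zero.mp hφne)
  have hiφ1 : 1 ≤ iφ := by
    rcases Nat.eq_zero_or_pos iφ with h0 | h; · rw [h0, pow_zero] at hiφ; omega
    exact h
  have hφlead : φ.coeff (q ^ iφ) ≠ 0 := by
    rw [← hiφ]; exact mt leadingCoeff_eq_zero.mp hφne
  have hSφne : Sφ.Nonempty := ⟨_, iφ, hiφ1, hφlead, rfl⟩
  have hSφfin : Sφ.Finite := by
    apply Set.Finite.subset (Set.Finite.image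
      (fun i : ℕ => ((ν (φ.coeff (q ^ i)) : ℝ) - (ν (φ.coeff 1) : ℝ)) / ((q : ℝ) ^ i - 1))
      (Set.finite_Iic φ.natDegree))
    rintro y ⟨i, hi1, hic, rfl⟩
    refine ⟨i, ?_, rfl⟩
    have h1 := le_natDegree_of_ne_zero hic
    have h2 := Nat.lt_pow_self (n := i) (by omega : 1 < q)
    exact Set.mem_Iic.mpr (by omega)
  have hsInfφ : sInf Sφ = -(n:ℝ) := by
    simp only [lamNu, ← hSφ] at hn; linarith
  -- lower bound for φ coefficients
  have hαall : ∀ j, φ.coeff (q ^ j) ≠ 0 → 0 ≤ ν (φ.coeff (q ^ j)) + n * ((q:ℤ)^j - 1) := by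
    intro j hj
    rcases Nat.eq_zero_or_pos j with rfl | hj1
    · rw [pow_zero] at hj ⊢; rw [pow_zero, hνφ]; ring_nf; omega
    · have hle : sInf Sφ ≤ ((ν (φ.coeff (q ^ j)) : ℝ) - (ν (φ.coeff 1) : ℝ)) / ((q : ℝ) ^ j - 1) :=
        csInf_le hSφfin.bddBelow ⟨j, hj1, hj, rfl⟩
      rw [hsInfφ, hνφ] at hle
      rw [Int.cast_zero, sub_zero] at hle
      exact (div_ge_iff_aux q j hq2 hj1 _ n).mp hle
  -- attained
  have hstar : ∃ i, 1 ≤ i ∧ φ.coeff (q ^ i) ≠ 0 ∧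
      ν (φ.coeff (q ^ i)) + n * ((q:ℤ)^i - 1) = 0 := by
    have hmem := Set.Nonempty.csInf_mem hSφne hSφfin
    rw [hsInfφ] at hmem
    obtain ⟨i, hi1, hic, heq⟩ := hmem
    refine ⟨i, hi1, hic, ?_⟩
    rw [hνφ, Int.cast_zero, sub_zero] at heq
    exact (div_eq_iff_aux q i hq2 hi1 _ n).mp heq.symm
  obtain ⟨istar, histar1, histarc, histar0⟩ := hstar
  -- the finset J for f and M, j₁
  have hJmem : ∀ j, f.coeff (q ^ j) ≠ 0 →
      j ∈ (Finset.range (f.natDegree + 1)).filter (fun j => f.coeff (q ^ j) ≠ 0) := by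
    intro j hj
    refine Finset.mem_filter.mpr ⟨Finset.mem_range.mpr ?_, hj⟩
    have h1 := le_natDegree_of_ne_zero hj
    have h2 := Nat.lt_pow_self (n := j) (by omega : 1 < q)
    omega
  set J := (Finset.range (f.natDegree + 1)).filter (fun j => f.coeff (q ^ j) ≠ 0) with hJ
  have hJne : J.Nonempty := by
    obtain ⟨m, hm⟩ := Polynomial.support_nonempty.mpr hf0
    rw [Polynomial.mem_support_iff] at hm
    obtain ⟨j, rfl⟩ := hf m hm
    exact ⟨j, hJmem j hm⟩
  set γ : ℕ → ℤ := fun j => ν (f.coeff (q ^ j)) + n * (q:ℤ)^j with hγ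
  set M := J.inf' hJne γ with hM
  have hMle : ∀ j, f.coeff (q ^ j) ≠ 0 → M ≤ γ j := fun j hj => Finset.inf'_le _ (hJmem j hj)
  have hJ1ne : (J.filter (fun j => γ j = M)).Nonempty := by
    obtain ⟨j, hjJ, hje⟩ := Finset.exists_mem_eq_inf' hJne γ
    exact ⟨j, Finset.mem_filter.mpr ⟨hjJ, hje.symm⟩⟩
  set j₁ := (J.filter (fun j => γ j = M)).max' hJ1ne with hj₁
  have hj₁mem := (J.filter (fun j => γ j = M)).max'_mem hJ1ne
  have hcj₁ : f.coeff (q ^ j₁) ≠ 0 := (Finset.mem_filter.mp ((Finset.mem_filter.mp hj₁mem).1)).2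
  have hγj₁ : γ j₁ = M := (Finset.mem_filter.mp hj₁mem).2
  have hj₁top : ∀ j, j₁ < j → f.coeff (q ^ j) ≠ 0 → M + 1 ≤ γ j := by
    intro j hlt hj
    have h1 := hMle j hj
    rcases eq_or_lt_of_le h1 with he | hl
    · exfalso
      have : j ≤ j₁ := Finset.le_max' _ j (Finset.mem_filter.mpr ⟨hJmem j hj, he.symm⟩)
      omega
    · omega
  -- r for φ
  have hIφmem : ∀ i, φ.coeff (q ^ i) ≠ 0 → ν (φ.coeff (q ^ i)) + n * ((q:ℤ)^i - 1) = 0 →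
      i ∈ (Finset.range (φ.natDegree + 1)).filter
        (fun i => φ.coeff (q ^ i) ≠ 0 ∧ ν (φ.coeff (q ^ i)) + n * ((q:ℤ)^i - 1) = 0) := by
    intro i hi h0
    refine Finset.mem_filter.mpr ⟨Finset.mem_range.mpr ?_, hi, h0⟩
    have h1 := le_natDegree_of_ne_zero hi
    have h2 := Nat.lt_pow_self (n := i) (by omega : 1 < q)
    omega
  set Iφ0 := (Finset.range (φ.natDegree + 1)).filter
    (fun i => φ.coeff (q ^ i) ≠ 0 ∧ ν (φ.coeff (q ^ i)) + n * ((q:ℤ)^i - 1) = 0) with hIφ0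
  have hIφ0ne : Iφ0.Nonempty := ⟨istar, hIφmem istar histarc histar0⟩
  set r := Iφ0.max' hIφ0ne with hr
  have hrmem := Iφ0.max'_mem hIφ0ne
  have har : φ.coeff (q ^ r) ≠ 0 := (Finset.mem_filter.mp hrmem).2.1
  have hαr : ν (φ.coeff (q ^ r)) + n * ((q:ℤ)^r - 1) = 0 := (Finset.mem_filter.mp hrmem).2.2
  have hr1 : 1 ≤ r := le_trans histar1 (Finset.le_max' _ istar (hIφmem istar histarc histar0))
  have hrtop : ∀ i, r < i → φ.coeff (q ^ i) ≠ 0 → 1 ≤ ν (φ.coeff (q ^ i)) + n * ((q:ℤ)^i - 1) := by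
    intro i hlt hi
    have h1 := hαall i hi
    rcases eq_or_lt_of_le h1 with he | hl
    · exfalso
      have : i ≤ r := Finset.le_max' _ i (hIφmem i hi he.symm)
      omega
    · omega

  -- composition coefficient formulas
  have hcompφ : ∀ k, (f.comp φ).coeff (q ^ k) =
      ∑ i ∈ Finset.range (k + 1), f.coeff (q ^ i) * (φ.coeff (q ^ (k - i))) ^ q ^ i :=
    fun k => comp_coeff p q e hpe hq2 f φ hf hφ k
  have hcompψ : ∀ k, (ψ.comp f).coeff (q ^ k) =
      ∑ i ∈ Finset.range (k + 1), ψ.coeff (q ^ i) * (f.coeff (q ^ (k - i))) ^ q ^ i :=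
    fun k => comp_coeff p q e hpe hq2 ψ f hψ hf k
  have hcast : ∀ i : ℕ, ((q ^ i : ℕ) : ℤ) = (q:ℤ)^i := fun i => by push_cast; ring
  have hQpos : ∀ i : ℕ, (1:ℤ) ≤ (q:ℤ)^i := fun i => one_le_pow₀ (by exact_mod_cast Nat.one_le_of_lt hq2)
  -- lower bound on all coefficients of f.comp φ
  have hPge : ∀ k, (f.comp φ).coeff (q ^ k) ≠ 0 →
      M - n * (q:ℤ)^k ≤ ν ((f.comp φ).coeff (q ^ k)) := by
    intro k hk
    rw [hcompφ k] at hk ⊢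
    refine nu_sum_ge ν hmul hadd _ _ _ ?_ hk
    intro i hi hgi
    obtain ⟨hci, hai'⟩ := mul_ne_zero_iff.mp hgi
    have hai : φ.coeff (q ^ (k - i)) ≠ 0 := fun h0 => hai' (by rw [h0]; exact zero_pow (by positivity))
    have hik : i ≤ k := by have := Finset.mem_range.mp hi; omega
    rw [hmul _ _ hci hai', nu_pow ν hmul _ hai, hcast i]
    have e1 : M ≤ ν (f.coeff (q ^ i)) + n * (q:ℤ)^i := hMle i hci
    have e2 : 0 ≤ ν (φ.coeff (q ^ (k - i))) + n * ((q:ℤ)^(k-i) - 1) := hαall _ hai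
    have e4 : (q:ℤ)^i * (q:ℤ)^(k-i) = (q:ℤ)^k := by rw [← pow_add]; congr 1; omega
    have e3 : 0 ≤ (q:ℤ)^i * (ν (φ.coeff (q ^ (k - i))) + n * ((q:ℤ)^(k-i) - 1)) :=
      mul_nonneg (by positivity) e2
    have e5 : (q:ℤ)^i * (ν (φ.coeff (q ^ (k - i))) + n * ((q:ℤ)^(k-i) - 1))
        = (q:ℤ)^i * ν (φ.coeff (q ^ (k - i))) + n * (q:ℤ)^k - n * (q:ℤ)^i := by
      rw [← e4]; ring
    linarith
  -- exact value at k* = j₁ + r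
  have hPstar : (f.comp φ).coeff (q ^ (j₁ + r)) ≠ 0 ∧
      ν ((f.comp φ).coeff (q ^ (j₁ + r))) = M - n * (q:ℤ)^(j₁ + r) := by
    rw [hcompφ]
    have hrr : j₁ + r - j₁ = r := by omega
    refine nu_sum_eq ν hmul hadd _ _ _ j₁ (Finset.mem_range.mpr (by omega)) ?_ ?_ ?_
    · rw [hrr]; exact mul_ne_zero hcj₁ (pow_ne_zero _ har)
    · rw [hrr, hmul _ _ hcj₁ (pow_ne_zero _ har), nu_pow ν hmul _ har, hcast j₁]
      have e4 : (q:ℤ)^j₁ * (q:ℤ)^r = (q:ℤ)^(j₁+r) := by rw [← pow_add]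
      have e6 : ν (φ.coeff (q ^ r)) = -(n * ((q:ℤ)^r - 1)) := by omega
      have e7 : ν (f.coeff (q ^ j₁)) = M - n * (q:ℤ)^j₁ := by
        have := hγj₁; simp only [hγ] at this; omega
      rw [e6, e7, ← e4]; ring
    · intro i hi hne hgi
      obtain ⟨hci, hai'⟩ := mul_ne_zero_iff.mp hgi
      have hai : φ.coeff (q ^ (j₁ + r - i)) ≠ 0 :=
        fun h0 => hai' (by rw [h0]; exact zero_pow (by positivity))
      have hik : i ≤ j₁ + r := by have := Finset.mem_range.mp hi; omega
      rw [hmul _ _ hci hai', nu_pow ν hmul _ hai, hcast i]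
      have e4 : (q:ℤ)^i * (q:ℤ)^(j₁ + r - i) = (q:ℤ)^(j₁+r) := by
        rw [← pow_add]; congr 1; omega
      rcases lt_or_gt_of_ne hne with hlt | hgt
      · -- i < j₁ : then j₁ + r - i > r
        have e1 : M ≤ ν (f.coeff (q ^ i)) + n * (q:ℤ)^i := hMle i hci
        have e2 : 1 ≤ ν (φ.coeff (q ^ (j₁ + r - i))) + n * ((q:ℤ)^(j₁ + r - i) - 1) :=
          hrtop _ (by omega) hai
        have e3 : (q:ℤ)^i * 1 ≤ (q:ℤ)^i *
            (ν (φ.coeff (q ^ (j₁ + r - i))) + n * ((q:ℤ)^(j₁ + r - i) - 1)) :=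
          mul_le_mul_of_nonneg_left e2 (by positivity)
        have e5 : (q:ℤ)^i * (ν (φ.coeff (q ^ (j₁ + r - i))) + n * ((q:ℤ)^(j₁ + r - i) - 1))
            = (q:ℤ)^i * ν (φ.coeff (q ^ (j₁ + r - i))) + n * (q:ℤ)^(j₁+r) - n * (q:ℤ)^i := by
          rw [← e4]; ring
        have := hQpos i
        linarith
      · -- i > j₁
        have e1 : M + 1 ≤ ν (f.coeff (q ^ i)) + n * (q:ℤ)^i := hj₁top i hgt hci
        have e2 : 0 ≤ ν (φ.coeff (q ^ (j₁ + r - i))) + n * ((q:ℤ)^(j₁ + r - i) - 1) :=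
          hαall _ hai
        have e3 : 0 ≤ (q:ℤ)^i *
            (ν (φ.coeff (q ^ (j₁ + r - i))) + n * ((q:ℤ)^(j₁ + r - i) - 1)) :=
          mul_nonneg (by positivity) e2
        have e5 : (q:ℤ)^i * (ν (φ.coeff (q ^ (j₁ + r - i))) + n * ((q:ℤ)^(j₁ + r - i) - 1))
            = (q:ℤ)^i * ν (φ.coeff (q ^ (j₁ + r - i))) + n * (q:ℤ)^(j₁+r) - n * (q:ℤ)^i := by
          rw [← e4]; ring
        linarith

  -- switch to ψ-side
  rw [hcomm] at hPge hPstar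
  -- index set for ψ
  have hIψmem : ∀ i, ψ.coeff (q ^ i) ≠ 0 →
      i ∈ (Finset.range (ψ.natDegree + 1)).filter (fun i => ψ.coeff (q ^ i) ≠ 0) := by
    intro i hi
    refine Finset.mem_filter.mpr ⟨Finset.mem_range.mpr ?_, hi⟩
    have h1 := le_natDegree_of_ne_zero hi
    have h2 := Nat.lt_pow_self (n := i) (by omega : 1 < q)
    omega
  set Iψ := (Finset.range (ψ.natDegree + 1)).filter (fun i => ψ.coeff (q ^ i) ≠ 0) with hIψ
  have hψ00 : ψ.coeff (q ^ 0) ≠ 0 := by rw [pow_zero]; exact hψ0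
  have hIψne : Iψ.Nonempty := ⟨0, hIψmem 0 hψ00⟩
  set β : ℕ → ℤ := fun i => ν (ψ.coeff (q ^ i)) + M * (q:ℤ)^i with hβ
  set B := Iψ.inf' hIψne β with hB
  have hBle : ∀ i, ψ.coeff (q ^ i) ≠ 0 → B ≤ β i := fun i hi => Finset.inf'_le _ (hIψmem i hi)
  have hIψ1ne : (Iψ.filter (fun i => β i = B)).Nonempty := by
    obtain ⟨i, hiI, hie⟩ := Finset.exists_mem_eq_inf' hIψne β
    exact ⟨i, Finset.mem_filter.mpr ⟨hiI, hie.symm⟩⟩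
  set isharp := (Iψ.filter (fun i => β i = B)).max' hIψ1ne with hisharp
  have hisharpmem := (Iψ.filter (fun i => β i = B)).max'_mem hIψ1ne
  have hbsharp : ψ.coeff (q ^ isharp) ≠ 0 :=
    (Finset.mem_filter.mp ((Finset.mem_filter.mp hisharpmem).1)).2
  have hβsharp : β isharp = B := (Finset.mem_filter.mp hisharpmem).2
  have hsharptop : ∀ i, isharp < i → ψ.coeff (q ^ i) ≠ 0 → B + 1 ≤ β i := by
    intro i hlt hi
    have h1 := hBle i hi
    rcases eq_or_lt_of_le h1 with he | hl
    · exfalso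
      have : i ≤ isharp := Finset.le_max' _ i (Finset.mem_filter.mpr ⟨hIψmem i hi, he.symm⟩)
      omega
    · omega
  -- M ≤ B via coefficient i♯ + j₁
  have hMB : M ≤ B := by
    have hk2 := nu_sum_eq ν hmul hadd (Finset.range (isharp + j₁ + 1))
      (fun i => ψ.coeff (q ^ i) * (f.coeff (q ^ (isharp + j₁ - i))) ^ q ^ i)
      (B - n * (q:ℤ)^(isharp + j₁)) isharp (Finset.mem_range.mpr (by omega)) ?_ ?_ ?_
    · have h1 : (ψ.comp f).coeff (q ^ (isharp + j₁)) ≠ 0 ∧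
          ν ((ψ.comp f).coeff (q ^ (isharp + j₁))) = B - n * (q:ℤ)^(isharp + j₁) := by
        rw [hcompψ]; exact hk2
      have h2 := hPge _ h1.1
      rw [h1.2] at h2
      omega
    · beta_reduce
      have hrr : isharp + j₁ - isharp = j₁ := by omega
      rw [hrr]; exact mul_ne_zero hbsharp (pow_ne_zero _ hcj₁)
    · beta_reduce
      have hrr : isharp + j₁ - isharp = j₁ := by omega
      rw [hrr, hmul _ _ hbsharp (pow_ne_zero _ hcj₁), nu_pow ν hmul _ hcj₁, hcast isharp]
      have e4 : (q:ℤ)^isharp * (q:ℤ)^j₁ = (q:ℤ)^(isharp+j₁) := by rw [← pow_add]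
      have e6 : ν (ψ.coeff (q ^ isharp)) = B - M * (q:ℤ)^isharp := by
        have := hβsharp; simp only [hβ] at this; omega
      have e7 : ν (f.coeff (q ^ j₁)) = M - n * (q:ℤ)^j₁ := by
        have := hγj₁; simp only [hγ] at this; omega
      rw [e6, e7, ← e4]; ring
    · intro i hi hne hgi
      beta_reduce
      beta_reduce at hgi
      obtain ⟨hbi, hci'⟩ := mul_ne_zero_iff.mp hgi
      have hci : f.coeff (q ^ (isharp + j₁ - i)) ≠ 0 :=
        fun h0 => hci' (by rw [h0]; exact zero_pow (by positivity))
      have hik : i ≤ isharp + j₁ := by have := Finset.mem_range.mp hi; omega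
      rw [hmul _ _ hbi hci', nu_pow ν hmul _ hci, hcast i]
      have e4 : (q:ℤ)^i * (q:ℤ)^(isharp + j₁ - i) = (q:ℤ)^(isharp+j₁) := by
        rw [← pow_add]; congr 1; omega
      rcases lt_or_gt_of_ne hne with hlt | hgt
      · -- i < i♯ ⇒ i♯ + j₁ - i > j₁
        have e1 : B ≤ ν (ψ.coeff (q ^ i)) + M * (q:ℤ)^i := hBle i hbi
        have e2 : M + 1 ≤ ν (f.coeff (q ^ (isharp + j₁ - i))) + n * (q:ℤ)^(isharp + j₁ - i) :=
          hj₁top _ (by omega) hci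
        have e3 : (q:ℤ)^i * (M + 1) ≤ (q:ℤ)^i *
            (ν (f.coeff (q ^ (isharp + j₁ - i))) + n * (q:ℤ)^(isharp + j₁ - i)) :=
          mul_le_mul_of_nonneg_left e2 (by positivity)
        have e5 : (q:ℤ)^i * (ν (f.coeff (q ^ (isharp + j₁ - i))) + n * (q:ℤ)^(isharp + j₁ - i))
            = (q:ℤ)^i * ν (f.coeff (q ^ (isharp + j₁ - i))) + n * (q:ℤ)^(isharp+j₁) := by
          rw [← e4]; ring
        have e6 : (q:ℤ)^i * (M + 1) = M * (q:ℤ)^i + (q:ℤ)^i := by ring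
        rw [e6] at e3
        have := hQpos i
        linarith
      · -- i > i♯
        have e1 : B + 1 ≤ ν (ψ.coeff (q ^ i)) + M * (q:ℤ)^i := hsharptop i hgt hbi
        have e2 : M ≤ ν (f.coeff (q ^ (isharp + j₁ - i))) + n * (q:ℤ)^(isharp + j₁ - i) :=
          hMle _ hci
        have e3 : (q:ℤ)^i * M ≤ (q:ℤ)^i *
            (ν (f.coeff (q ^ (isharp + j₁ - i))) + n * (q:ℤ)^(isharp + j₁ - i)) :=
          mul_le_mul_of_nonneg_left e2 (by positivity)
        have e5 : (q:ℤ)^i * (ν (f.coeff (q ^ (isharp + j₁ - i))) + n * (q:ℤ)^(isharp + j₁ - i))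
            = (q:ℤ)^i * ν (f.coeff (q ^ (isharp + j₁ - i))) + n * (q:ℤ)^(isharp+j₁) := by
          rw [← e4]; ring
        linarith
  -- all ψ coefficients satisfy the M-bound
  have hβall : ∀ i, ψ.coeff (q ^ i) ≠ 0 → 0 ≤ ν (ψ.coeff (q ^ i)) + M * ((q:ℤ)^i - 1) := by
    intro i hi
    have h1 := hBle i hi
    simp only [hβ] at h1
    have hν0 : ν (ψ.coeff (q ^ 0)) = 0 := by rw [pow_zero]; exact hνψ
    have h0 : B ≤ ν (ψ.coeff (q ^ 0)) + M * (q:ℤ)^0 := hBle 0 hψ00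
    rw [hν0, pow_zero] at h0
    have e : M * ((q:ℤ)^i - 1) = M * (q:ℤ)^i - M := by ring
    have := hMB
    linarith
  -- existence of an index attaining equality
  have hexists : ∃ i, 1 ≤ i ∧ ψ.coeff (q ^ i) ≠ 0 ∧
      ν (ψ.coeff (q ^ i)) + M * ((q:ℤ)^i - 1) = 0 := by
    by_contra hcon
    push_neg at hcon
    have hstrict : ∀ i, 1 ≤ i → ψ.coeff (q ^ i) ≠ 0 →
        1 ≤ ν (ψ.coeff (q ^ i)) + M * ((q:ℤ)^i - 1) := by
      intro i hi1 hi
      have h1 := hβall i hi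
      have h2 := hcon i hi1 hi
      omega
    have hbound : M + 1 - n * (q:ℤ)^(j₁ + r) ≤ ν ((ψ.comp f).coeff (q ^ (j₁ + r))) := by
      rw [hcompψ]
      refine nu_sum_ge ν hmul hadd _ _ _ ?_ ?_
      · intro i hi hgi
        obtain ⟨hbi, hci'⟩ := mul_ne_zero_iff.mp hgi
        have hci : f.coeff (q ^ (j₁ + r - i)) ≠ 0 :=
          fun h0 => hci' (by rw [h0]; exact zero_pow (by positivity))
        have hik : i ≤ j₁ + r := by have := Finset.mem_range.mp hi; omega
        rw [hmul _ _ hbi hci', nu_pow ν hmul _ hci, hcast i]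
        have e4 : (q:ℤ)^i * (q:ℤ)^(j₁ + r - i) = (q:ℤ)^(j₁+r) := by
          rw [← pow_add]; congr 1; omega
        rcases Nat.eq_zero_or_pos i with rfl | hi1
        · -- i = 0 : the f-index is j₁ + r > j₁
          have e2 : M + 1 ≤ ν (f.coeff (q ^ (j₁ + r - 0))) + n * (q:ℤ)^(j₁ + r - 0) :=
            hj₁top _ (by omega) hci
          have hν0 : ν (ψ.coeff (q ^ 0)) = 0 := by rw [pow_zero]; exact hνψ
          rw [hν0]
          simp only [pow_zero, one_mul, Nat.sub_zero] at *
          omega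
        · have e1 : 1 ≤ ν (ψ.coeff (q ^ i)) + M * ((q:ℤ)^i - 1) := hstrict i hi1 hbi
          have e2 : M ≤ ν (f.coeff (q ^ (j₁ + r - i))) + n * (q:ℤ)^(j₁ + r - i) := hMle _ hci
          have e3 : (q:ℤ)^i * M ≤ (q:ℤ)^i *
              (ν (f.coeff (q ^ (j₁ + r - i))) + n * (q:ℤ)^(j₁ + r - i)) :=
            mul_le_mul_of_nonneg_left e2 (by positivity)
          have e5 : (q:ℤ)^i * (ν (f.coeff (q ^ (j₁ + r - i))) + n * (q:ℤ)^(j₁ + r - i))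
              = (q:ℤ)^i * ν (f.coeff (q ^ (j₁ + r - i))) + n * (q:ℤ)^(j₁+r) := by
            rw [← e4]; ring
          have e6 : M * ((q:ℤ)^i - 1) = M * (q:ℤ)^i - M := by ring
          have e7 : (q:ℤ)^i * M = M * (q:ℤ)^i := by ring
          rw [e7] at e3
          have := hQpos i
          linarith
      · rw [← hcompψ]; exact hPstar.1
    rw [hPstar.2] at hbound
    omega
  obtain ⟨i₁, hi₁1, hbi₁, hβi₁⟩ := hexists
  -- conclude : lamNu ψ = M
  refine ⟨M, ?_⟩
  have hSψInf : sInf {y : ℝ | ∃ i : ℕ, 1 ≤ i ∧ ψ.coeff (q ^ i) ≠ 0 ∧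
      y = ((ν (ψ.coeff (q ^ i)) : ℝ) - (ν (ψ.coeff 1) : ℝ)) / ((q : ℝ) ^ i - 1)}
      = -(M:ℝ) := by
    refine IsLeast.csInf_eq ⟨⟨i₁, hi₁1, hbi₁, ?_⟩, ?_⟩
    · rw [hνψ, Int.cast_zero, sub_zero]
      exact ((div_eq_iff_aux q i₁ hq2 hi₁1 _ M).mpr hβi₁).symm
    · rintro y ⟨i, hi1, hbi, rfl⟩
      rw [hνψ, Int.cast_zero, sub_zero]
      exact (div_ge_iff_aux q i hq2 hi1 _ M).mpr (hβall i hbi)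
  simp only [lamNu, hSψInf, neg_neg]
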